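/- arXiv:1701.04165 — 2 statements merged into one kernel-verified Lean document; each statement's English description precedes it below -/
import Mathlib

section
/- For every positive even integer i, there is no binary [3i, 2, 2i] LCD code, but there exists a binary [3i, 2, 2i−1] LCD code; hence LCD[3i,2] = 2i − 1 for i even. -/
open Matrix

/-- The dual code of a binary linear code `C ⊆ GF(2)^n` under the standard bilinear form. -/
def dualCode {n : ℕ} (C : Submodule (ZMod 2) (Fin n → ZMod 2)) :
    Submodule (ZMod 2) (Fin n → ZMod 2) where
  carrier := {v | ∀ c ∈ C, v ⬝ᵥ c = 0}
  add_mem' := by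
    intro a b ha hb c hc
    simp [add_dotProduct, ha c hc, hb c hc]
  zero_mem' := by
    intro c hc
    simp
  smul_mem' := by
    intro r a ha c hc
    simp [smul_dotProduct, ha c hc]

/-- A linear code is LCD if it intersects its dual trivially. -/
def isLCD {n : ℕ} (C : Submodule (ZMod 2) (Fin n → ZMod 2)) : Prop :=
  C ⊓ dualCode C = ⊥

/-- `C` has minimum distance `d`: every nonzero codeword has Hamming weight at least `d`,
and some nonzero codeword has Hamming weight exactly `d`. -/
def hasMinDist {n : ℕ} (C : Submodule (ZMod 2) (Fin n → ZMod 2)) (d : ℕ) : Prop :=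
  (∀ v ∈ C, v ≠ 0 → d ≤ hammingNorm v) ∧ ∃ v ∈ C, v ≠ 0 ∧ hammingNorm v = d

/-- `LCDmax n k` is the largest minimum distance among binary `[n,k]` LCD codes. -/
noncomputable def LCDmax (n k : ℕ) : ℕ :=
  sSup {d | ∃ C : Submodule (ZMod 2) (Fin n → ZMod 2),
    Module.finrank (ZMod 2) ↥C = k ∧ hasMinDist C d ∧ isLCD C}

section Aux
open Finset

private lemma zmod2_mul : ∀ a b : ZMod 2, a * b = if a ≠ 0 ∧ b ≠ 0 then 1 else 0 := by decide
private lemma zmod2_cases : ∀ a : ZMod 2, a = 0 ∨ a = 1 := by decide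

private lemma dot_eq_card {n : ℕ} (u v : Fin n → ZMod 2) :
    u ⬝ᵥ v = ((univ.filter fun j => u j ≠ 0 ∧ v j ≠ 0).card : ZMod 2) := by
  rw [dotProduct]; simp_rw [zmod2_mul]; rw [Finset.sum_boole]

private lemma norm_def' {n : ℕ} (v : Fin n → ZMod 2) :
    hammingNorm v = (univ.filter fun j => v j ≠ 0).card := rfl

private lemma weight_add {n : ℕ} (u v : Fin n → ZMod 2) :
    hammingNorm (u + v) + 2 * (univ.filter fun j => u j ≠ 0 ∧ v j ≠ 0).card
      = hammingNorm u + hammingNorm v := by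
  have key : ∀ a b : ZMod 2, ((if a + b ≠ 0 then 1 else 0) + 2 * (if a ≠ 0 ∧ b ≠ 0 then 1 else 0) : ℕ)
      = (if a ≠ 0 then 1 else 0) + (if b ≠ 0 then 1 else 0) := by decide
  simp only [norm_def', Finset.card_filter]
  rw [Finset.mul_sum, ← Finset.sum_add_distrib, ← Finset.sum_add_distrib]
  refine Finset.sum_congr rfl fun j _ => ?_
  simpa using key (u j) (v j)

private lemma weight_sum_le {n : ℕ} (u v : Fin n → ZMod 2) :
    hammingNorm u + hammingNorm v + hammingNorm (u + v) ≤ 2 * n := by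
  have key : ∀ a b : ZMod 2, ((if a ≠ 0 then 1 else 0) + (if b ≠ 0 then 1 else 0)
      + (if a + b ≠ 0 then 1 else 0) : ℕ) ≤ 2 := by decide
  simp only [norm_def', Finset.card_filter]
  calc (∑ j, if u j ≠ 0 then 1 else 0) + (∑ j, if v j ≠ 0 then 1 else 0)
        + (∑ j : Fin n, if (u + v) j ≠ 0 then 1 else 0)
      = ∑ j : Fin n, ((if u j ≠ 0 then 1 else 0) + (if v j ≠ 0 then 1 else 0)
          + (if u j + v j ≠ 0 then 1 else 0)) := by
        rw [Finset.sum_add_distrib, Finset.sum_add_distrib]; rfl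
    _ ≤ ∑ _j : Fin n, 2 := Finset.sum_le_sum fun j _ => key (u j) (v j)
    _ = 2 * n := by simp [mul_comm]

private lemma card_fin_filter (n : ℕ) (p : ℕ → Prop) [DecidablePred p] :
    (univ.filter fun j : Fin n => p ↑j).card = ((range n).filter p).card := by
  rw [Finset.card_filter, Finset.card_filter]
  exact Fin.sum_univ_eq_sum_range (fun j => if p j then 1 else 0) n

private lemma natCast_zmod2 (m : ℕ) : (m : ZMod 2) = if m % 2 = 1 then 1 else 0 := by
  rw [← ZMod.natCast_mod m 2]
  rcases Nat.mod_two_eq_zero_or_one m with h | h <;> rw [h] <;> simp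

/-- First generator row: ones on the first `2i` coordinates. -/
private def gg1 (i : ℕ) : Fin (3*i) → ZMod 2 := fun j => if (j:ℕ) < 2*i then 1 else 0
/-- Second generator row: ones on the last `2i - 1` coordinates. -/
private def gg2 (i : ℕ) : Fin (3*i) → ZMod 2 := fun j => if i+1 ≤ (j:ℕ) then 1 else 0

private lemma filter_eq_gg1 (i : ℕ) : ∀ v : Fin (3*i) → ZMod 2, v = gg1 i →
    (univ.filter fun j => v j ≠ 0) = univ.filter fun j : Fin (3*i) => (j:ℕ) < 2*i := by
  intro v hv
  subst hv
  apply Finset.filter_congr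
  intro j _
  simp [gg1]

private lemma wt_gg1 (i : ℕ) : hammingNorm (gg1 i) = 2*i := by
  rw [norm_def', filter_eq_gg1 i _ rfl, card_fin_filter (3*i) (fun x => x < 2*i)]
  rw [show (range (3*i)).filter (fun x => x < 2*i) = range (2*i) by
    ext x; simp only [Finset.mem_filter, Finset.mem_range]; omega]
  exact Finset.card_range _

private lemma wt_gg2 (i : ℕ) (hi : 1 ≤ i) : hammingNorm (gg2 i) = 2*i - 1 := by
  rw [norm_def']
  rw [show (univ.filter fun j => gg2 i j ≠ 0) = univ.filter (fun j : Fin (3*i) => i+1 ≤ (j:ℕ))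
    from Finset.filter_congr fun j _ => by simp [gg2]]
  rw [card_fin_filter (3*i) (fun x => i+1 ≤ x)]
  rw [show (range (3*i)).filter (fun x => i+1 ≤ x) = range (3*i) \ range (i+1) by
    ext x; simp only [Finset.mem_filter, Finset.mem_range, Finset.mem_sdiff]; omega]
  rw [Finset.card_sdiff_of_subset (by apply Finset.range_subset_range.2; omega)]
  simp only [Finset.card_range]; omega

private lemma wt_gg12 (i : ℕ) (hi : 1 ≤ i) : hammingNorm (gg1 i + gg2 i) = 2*i + 1 := by
  rw [norm_def']
  rw [show (univ.filter fun j => (gg1 i + gg2 i) j ≠ 0)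
      = univ.filter (fun j : Fin (3*i) => (j:ℕ) < i+1 ∨ 2*i ≤ (j:ℕ)) from
    Finset.filter_congr fun j _ => by
      by_cases h1 : (j:ℕ) < 2*i <;> by_cases h2 : i+1 ≤ (j:ℕ) <;>
        simp [gg1, gg2, h1, h2, Pi.add_apply, show (1:ZMod 2)+1 = 0 from rfl] <;> omega]
  rw [card_fin_filter (3*i) (fun x => x < i+1 ∨ 2*i ≤ x)]
  rw [show (range (3*i)).filter (fun x => x < i+1 ∨ 2*i ≤ x)
      = range (i+1) ∪ (range (3*i) \ range (2*i)) by
    ext x; simp only [Finset.mem_filter, Finset.mem_range, Finset.mem_union, Finset.mem_sdiff]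
    omega]
  rw [Finset.card_union_of_disjoint (by
    simp [Finset.disjoint_left, Finset.mem_range]; omega)]
  rw [Finset.card_sdiff_of_subset (by apply Finset.range_subset_range.2; omega)]
  simp only [Finset.card_range]; omega

private lemma dot_gg11 (i : ℕ) : gg1 i ⬝ᵥ gg1 i = 0 := by
  rw [dot_eq_card]
  rw [show (univ.filter fun j => gg1 i j ≠ 0 ∧ gg1 i j ≠ 0)
      = univ.filter (fun j : Fin (3*i) => (j:ℕ) < 2*i) from
    Finset.filter_congr fun j _ => by simp [gg1]]
  rw [card_fin_filter (3*i) (fun x => x < 2*i)]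
  rw [show (range (3*i)).filter (fun x => x < 2*i) = range (2*i) by
    ext x; simp only [Finset.mem_filter, Finset.mem_range]; omega]
  rw [Finset.card_range, natCast_zmod2]
  simp [Nat.mul_mod_right]

private lemma dot_gg22 (i : ℕ) (hi : 1 ≤ i) : gg2 i ⬝ᵥ gg2 i = 1 := by
  rw [dot_eq_card]
  rw [show (univ.filter fun j => gg2 i j ≠ 0 ∧ gg2 i j ≠ 0)
      = univ.filter (fun j : Fin (3*i) => i+1 ≤ (j:ℕ)) from
    Finset.filter_congr fun j _ => by simp [gg2]]
  rw [card_fin_filter (3*i) (fun x => i+1 ≤ x)]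
  rw [show (range (3*i)).filter (fun x => i+1 ≤ x) = range (3*i) \ range (i+1) by
    ext x; simp only [Finset.mem_filter, Finset.mem_range, Finset.mem_sdiff]; omega]
  rw [Finset.card_sdiff_of_subset (by apply Finset.range_subset_range.2; omega), Finset.card_range,
    Finset.card_range, natCast_zmod2]
  rw [if_pos (by omega)]

private lemma dot_gg12 (i : ℕ) (hi : 1 ≤ i) (heven : Even i) : gg1 i ⬝ᵥ gg2 i = 1 := by
  obtain ⟨k, hk⟩ := heven
  rw [dot_eq_card]
  rw [show (univ.filter fun j => gg1 i j ≠ 0 ∧ gg2 i j ≠ 0)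
      = univ.filter (fun j : Fin (3*i) => i+1 ≤ (j:ℕ) ∧ (j:ℕ) < 2*i) from
    Finset.filter_congr fun j _ => by simp [gg1, gg2]; tauto]
  rw [card_fin_filter (3*i) (fun x => i+1 ≤ x ∧ x < 2*i)]
  rw [show (range (3*i)).filter (fun x => i+1 ≤ x ∧ x < 2*i) = range (2*i) \ range (i+1) by
    ext x; simp only [Finset.mem_filter, Finset.mem_range, Finset.mem_sdiff]; omega]
  rw [Finset.card_sdiff_of_subset (by apply Finset.range_subset_range.2; omega), Finset.card_range,
    Finset.card_range, natCast_zmod2]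
  rw [if_pos (by omega)]

private lemma gg_indep (i : ℕ) (hi : 1 ≤ i) : LinearIndependent (ZMod 2) ![gg1 i, gg2 i] := by
  have hx : gg1 i ≠ 0 := by
    intro h; have := congrFun h ⟨0, by omega⟩; simp [gg1] at this; omega
  rw [LinearIndependent.pair_iff' hx]
  intro a
  rcases zmod2_cases a with h | h <;> subst h
  · simp only [zero_smul]
    intro h; have := congrFun h ⟨3*i-1, by omega⟩
    rw [gg2, if_pos (show i+1 ≤ (⟨3*i-1, by omega⟩ : Fin (3*i)) by simp; omega)] at this
    exact one_ne_zero this.symm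
  · simp only [one_smul]
    intro h; have := congrFun h ⟨0, by omega⟩
    rw [gg1, gg2] at this
    rw [if_pos (show (((⟨0, by omega⟩ : Fin (3*i)) : ℕ)) < 2*i by simp; omega)] at this
    rw [if_neg (show ¬ (i+1 ≤ ((⟨0, by omega⟩ : Fin (3*i)) : ℕ)) by simp)] at this
    exact one_ne_zero this

/-- The explicit `[3i, 2, 2i-1]` LCD code. -/
private lemma exists_code (i : ℕ) (hi : 1 ≤ i) (heven : Even i) :
    ∃ C : Submodule (ZMod 2) (Fin (3 * i) → ZMod 2),
      Module.finrank (ZMod 2) ↥C = 2 ∧ hasMinDist C (2 * i - 1) ∧ isLCD C := by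
  refine ⟨Submodule.span (ZMod 2) {gg1 i, gg2 i}, ?_, ?_, ?_⟩
  · have h := finrank_span_eq_card (gg_indep i hi)
    rw [show Set.range ![gg1 i, gg2 i] = {gg1 i, gg2 i} by
      ext z; simp [Fin.exists_fin_two, or_comm]] at h
    simpa using h
  · constructor
    · intro v hv hv0
      obtain ⟨a, b, hab⟩ := Submodule.mem_span_pair.1 hv
      rcases zmod2_cases a with ha | ha <;> rcases zmod2_cases b with hb | hb <;>
          subst ha <;> subst hb <;> simp only [zero_smul, one_smul, add_zero, zero_add] at hab
      · exact absurd hab.symm hv0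
      · rw [← hab, wt_gg2 i hi]
      · rw [← hab, wt_gg1 i]; omega
      · rw [← hab, wt_gg12 i hi]; omega
    · refine ⟨gg2 i, Submodule.subset_span (by simp), ?_, wt_gg2 i hi⟩
      intro h
      have := congrFun h ⟨3*i-1, by omega⟩
      rw [show gg2 i ⟨3*i-1, by omega⟩ = 1 from by
        rw [gg2, if_pos (show i+1 ≤ ((⟨3*i-1, by omega⟩ : Fin (3*i)) : ℕ) by simp; omega)]] at this
      exact one_ne_zero this
  · rw [isLCD, eq_bot_iff]
    rintro x hx
    rw [Submodule.mem_inf] at hx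
    obtain ⟨hxC, hxD⟩ := hx
    have hg1 : gg1 i ∈ Submodule.span (ZMod 2) {gg1 i, gg2 i} :=
      Submodule.subset_span (by simp)
    have hg2 : gg2 i ∈ Submodule.span (ZMod 2) {gg1 i, gg2 i} :=
      Submodule.subset_span (by simp)
    have h1 : x ⬝ᵥ gg1 i = 0 := hxD (gg1 i) hg1
    have h2 : x ⬝ᵥ gg2 i = 0 := hxD (gg2 i) hg2
    obtain ⟨a, b, hab⟩ := Submodule.mem_span_pair.1 hxC
    rw [← hab, add_dotProduct, smul_dotProduct, smul_dotProduct,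
      dot_gg11, dotProduct_comm, dot_gg12 i hi heven] at h1
    rw [← hab, add_dotProduct, smul_dotProduct, smul_dotProduct,
      dot_gg12 i hi heven, dot_gg22 i hi] at h2
    simp only [smul_eq_mul, mul_zero, mul_one, zero_add] at h1
    simp only [smul_eq_mul, mul_one] at h2
    rw [Submodule.mem_bot, ← hab, h1]
    have ha : a = 0 := by rw [h1] at h2; simpa using h2
    rw [ha]
    simp

/-- There is no `[3i, 2, d]` LCD code with `d ≥ 2i` (for `i` even). -/
private lemma key (i d : ℕ) (heven : Even i) (hd : 2*i ≤ d)
    (C : Submodule (ZMod 2) (Fin (3*i) → ZMod 2))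
    (hrk : Module.finrank (ZMod 2) ↥C = 2) (hmd : hasMinDist C d) (hlcd : isLCD C) :
    False := by
  have b : Module.Basis (Fin 2) (ZMod 2) ↥C := Module.finBasisOfFinrankEq (ZMod 2) ↥C hrk
  set u : Fin (3*i) → ZMod 2 := ↑(b 0) with hu_def
  set v : Fin (3*i) → ZMod 2 := ↑(b 1) with hv_def
  have hu : u ∈ C := (b 0).2
  have hv : v ∈ C := (b 1).2
  have huv : u + v ∈ C := C.add_mem hu hv
  have hune : u ≠ 0 := by
    intro h
    exact b.ne_zero 0 (by rwa [hu_def, ZeroMemClass.coe_eq_zero] at h)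
  have hvne : v ≠ 0 := by
    intro h
    exact b.ne_zero 1 (by rwa [hv_def, ZeroMemClass.coe_eq_zero] at h)
  have hne : u ≠ v := by
    intro h
    have : b 0 = b 1 := Subtype.coe_injective h
    exact absurd (b.injective this) (by decide)
  have huvne : u + v ≠ 0 := by
    intro h
    apply hne
    funext j
    have h2 : ∀ a b : ZMod 2, a + b = 0 → a = b := by decide
    exact h2 _ _ (congrFun h j)
  have w1 := hmd.1 u hu hune
  have w2 := hmd.1 v hv hvne
  have w3 := hmd.1 (u + v) huv huvne
  have hsum := weight_sum_le u v
  have e1 : hammingNorm u = 2*i := by omega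
  have e2 : hammingNorm v = 2*i := by omega
  have e3 : hammingNorm (u + v) = 2*i := by omega
  have hw := weight_add u v
  rw [e1, e2, e3] at hw
  have hp : (univ.filter fun j => u j ≠ 0 ∧ v j ≠ 0).card = i := by omega
  obtain ⟨k, hk⟩ := heven
  have duv : u ⬝ᵥ v = 0 := by
    rw [dot_eq_card, hp, natCast_zmod2, if_neg (by omega)]
  have duu : u ⬝ᵥ u = 0 := by
    rw [dot_eq_card,
      show (univ.filter fun j => u j ≠ 0 ∧ u j ≠ 0) = univ.filter fun j => u j ≠ 0 from
        Finset.filter_congr fun j _ => by tauto,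
      ← norm_def', e1, natCast_zmod2, if_neg (by omega)]
  have hud : ∀ c ∈ C, u ⬝ᵥ c = 0 := by
    intro c hc
    have hrep := b.sum_repr ⟨c, hc⟩
    rw [Fin.sum_univ_two] at hrep
    have hc2 : c = (b.repr ⟨c, hc⟩ 0) • u + (b.repr ⟨c, hc⟩ 1) • v := by
      have := congrArg (Subtype.val) hrep
      simpa [hu_def, hv_def] using this.symm
    rw [hc2, dotProduct_add, dotProduct_smul, dotProduct_smul, duu, duv]
    simp
  have humem : u ∈ C ⊓ dualCode C := ⟨hu, hud⟩
  rw [isLCD] at hlcd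
  rw [hlcd, Submodule.mem_bot] at humem
  exact hune humem

end Aux

/-- For every positive even integer `i`, there is no binary `[3i, 2, 2i]` LCD code, but there
is a binary `[3i, 2, 2i−1]` LCD code; hence `LCD[3i, 2] = 2i − 1` for even `i`. -/
theorem lcd_3i_even (i : ℕ) (hi : 1 ≤ i) (heven : Even i) :
    (¬ ∃ C : Submodule (ZMod 2) (Fin (3 * i) → ZMod 2),
      Module.finrank (ZMod 2) ↥C = 2 ∧ hasMinDist C (2 * i) ∧ isLCD C) ∧
    (∃ C : Submodule (ZMod 2) (Fin (3 * i) → ZMod 2),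
      Module.finrank (ZMod 2) ↥C = 2 ∧ hasMinDist C (2 * i - 1) ∧ isLCD C) ∧
    LCDmax (3 * i) 2 = 2 * i - 1 := by
  have hub : ∀ d ∈ {d | ∃ C : Submodule (ZMod 2) (Fin (3 * i) → ZMod 2),
      Module.finrank (ZMod 2) ↥C = 2 ∧ hasMinDist C d ∧ isLCD C}, d ≤ 2 * i - 1 := by
    rintro d ⟨C, h1, h2, h3⟩
    by_contra h
    exact key i d heven (by omega) C h1 h2 h3
  have hmem : (2 * i - 1) ∈ {d | ∃ C : Submodule (ZMod 2) (Fin (3 * i) → ZMod 2),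
      Module.finrank (ZMod 2) ↥C = 2 ∧ hasMinDist C d ∧ isLCD C} :=
    exists_code i hi heven
  refine ⟨?_, exists_code i hi heven, ?_⟩
  · rintro ⟨C, h1, h2, h3⟩
    exact key i (2 * i) heven le_rfl C h1 h2 h3
  · rw [LCDmax]
    exact le_antisymm (csSup_le ⟨_, hmem⟩ hub) (le_csSup ⟨2 * i - 1, hub⟩ hmem)
end

section
/- If k ≥ 4 is even, then every binary [n,k] LCD code contains an [n, k−2] LCD subcode; consequently LCD[n,k] ≤ LCD[n,k−2] for any n ≥ k. -/
open Matrix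

lemma mem_dualCode {n : ℕ} {C : Submodule (ZMod 2) (Fin n → ZMod 2)} {v : Fin n → ZMod 2} :
    v ∈ dualCode C ↔ ∀ c ∈ C, v ⬝ᵥ c = 0 := Iff.rfl

lemma isLCD_iff {n : ℕ} {C : Submodule (ZMod 2) (Fin n → ZMod 2)} :
    isLCD C ↔ ∀ v ∈ C, (∀ c ∈ C, v ⬝ᵥ c = 0) → v = 0 := by
  unfold isLCD
  rw [Submodule.eq_bot_iff]
  constructor
  · intro h v hv hd
    exact h v (Submodule.mem_inf.2 ⟨hv, hd⟩)
  · intro h v hv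
    rcases Submodule.mem_inf.1 hv with ⟨h1, h2⟩
    exact h v h1 h2

lemma zmod2_ne_zero' : ∀ x : ZMod 2, x ≠ 0 → x = 1 := by decide

lemma zmod2_ne_zero {x : ZMod 2} (h : x ≠ 0) : x = 1 := zmod2_ne_zero' x h

/-- Nondegeneracy: find `w` pairing to 1 with a given nonzero `v`. -/
lemma exists_pairing {n : ℕ} {C : Submodule (ZMod 2) (Fin n → ZMod 2)} (hC : isLCD C)
    {v : Fin n → ZMod 2} (hv : v ∈ C) (hv0 : v ≠ 0) : ∃ w ∈ C, v ⬝ᵥ w = 1 := by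
  by_contra h
  push_neg at h
  apply hv0
  apply isLCD_iff.1 hC v hv
  intro c hc
  by_contra hvc
  exact h c hc (zmod2_ne_zero hvc)

lemma exists_good_pair {n : ℕ} {C : Submodule (ZMod 2) (Fin n → ZMod 2)} (hC : isLCD C)
    (hk : 2 ≤ Module.finrank (ZMod 2) ↥C) :
    ∃ v ∈ C, ∃ w ∈ C, v ⬝ᵥ w = 1 ∧ (v ⬝ᵥ v) * (w ⬝ᵥ w) = 0 := by
  by_cases halt : ∃ v ∈ C, v ≠ 0 ∧ v ⬝ᵥ v = 0
  · rcases halt with ⟨v, hv, hv0, hq⟩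
    rcases exists_pairing hC hv hv0 with ⟨w, hw, hvw⟩
    exact ⟨v, hv, w, hw, hvw, by rw [hq, zero_mul]⟩
  · push_neg at halt
    -- every nonzero vector has self-pairing 1
    exfalso
    have hCne : C ≠ ⊥ := by
      intro h
      rw [h] at hk
      simp at hk
    rcases Submodule.exists_mem_ne_zero_of_ne_bot hCne with ⟨u, hu, hu0⟩
    have hnotle : ¬ C ≤ Submodule.span (ZMod 2) {u} := by
      intro hle
      have := Submodule.finrank_mono hle
      rw [finrank_span_singleton hu0] at this
      omega
    rcases SetLike.not_le_iff_exists.1 hnotle with ⟨v, hv, hvs⟩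
    have hv0 : v ≠ 0 := by rintro rfl; exact hvs (Submodule.zero_mem _)
    have huv : u + v ≠ 0 := by
      intro h
      apply hvs
      have : v = -u := by linear_combination h
      rw [this]
      exact Submodule.neg_mem _ (Submodule.mem_span_singleton_self u)
    have h1 := zmod2_ne_zero (halt u hu hu0)
    have h2 := zmod2_ne_zero (halt v hv hv0)
    have h3 := zmod2_ne_zero (halt (u + v) (C.add_mem hu hv) huv)
    rw [add_dotProduct, dotProduct_add, dotProduct_add, h1, h2,
      dotProduct_comm v u] at h3
    have key : ∀ x : ZMod 2, ¬ (1 + x + (x + 1) = 1) := by decide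
    exact key _ h3

/-- The key subcode construction. -/
lemma exists_subcode {n k : ℕ} (hk : 2 ≤ k) (C : Submodule (ZMod 2) (Fin n → ZMod 2))
    (hrk : Module.finrank (ZMod 2) ↥C = k) (hC : isLCD C) :
    ∃ D : Submodule (ZMod 2) (Fin n → ZMod 2),
      D ≤ C ∧ Module.finrank (ZMod 2) ↥D = k - 2 ∧ isLCD D := by
  obtain ⟨v, hv, w, hw, hvw, hq⟩ := exists_good_pair hC (hrk ▸ hk)
  set f : ↥C →ₗ[ZMod 2] (ZMod 2 × ZMod 2) :=
    { toFun := fun x => ((x : Fin n → ZMod 2) ⬝ᵥ v, (x : Fin n → ZMod 2) ⬝ᵥ w)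
      map_add' := by intro x y; simp [add_dotProduct]
      map_smul' := by intro r x; simp [smul_dotProduct] } with hf
  have hwv : w ⬝ᵥ v = 1 := (dotProduct_comm w v).trans hvw
  have hfv : f ⟨v, hv⟩ = (v ⬝ᵥ v, 1) := by simp [hf, hvw]
  have hfw : f ⟨w, hw⟩ = (1, w ⬝ᵥ w) := by simp [hf, hwv]
  have hrange : LinearMap.range f = ⊤ := by
    rw [eq_top_iff]
    rintro ⟨p, q⟩ -
    have h10 : ((1 : ZMod 2), (0 : ZMod 2)) ∈ LinearMap.range f := by
      have hmem := (LinearMap.range f).add_mem (LinearMap.mem_range_self f ⟨w, hw⟩)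
        ((LinearMap.range f).smul_mem (w ⬝ᵥ w) (LinearMap.mem_range_self f ⟨v, hv⟩))
      rw [hfv, hfw] at hmem
      have key : ∀ a e : ZMod 2, a * e = 0 →
          ((1 : ZMod 2), e) + e • (a, (1 : ZMod 2)) = (1, 0) := by decide
      rwa [key _ _ hq] at hmem
    have h01 : ((0 : ZMod 2), (1 : ZMod 2)) ∈ LinearMap.range f := by
      have hmem := (LinearMap.range f).add_mem (LinearMap.mem_range_self f ⟨v, hv⟩)
        ((LinearMap.range f).smul_mem (v ⬝ᵥ v) (LinearMap.mem_range_self f ⟨w, hw⟩))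
      rw [hfv, hfw] at hmem
      have key : ∀ a e : ZMod 2, a * e = 0 →
          ((a : ZMod 2), (1 : ZMod 2)) + a • ((1 : ZMod 2), e) = (0, 1) := by decide
      rwa [key _ _ hq] at hmem
    have key3 : ∀ p q : ZMod 2, (p, q) = p • ((1 : ZMod 2), (0 : ZMod 2)) +
        q • ((0 : ZMod 2), (1 : ZMod 2)) := by decide
    rw [key3 p q]
    exact (LinearMap.range f).add_mem ((LinearMap.range f).smul_mem p h10)
      ((LinearMap.range f).smul_mem q h01)
  refine ⟨Submodule.map C.subtype (LinearMap.ker f), Submodule.map_subtype_le _ _, ?_, ?_⟩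
  · rw [Submodule.finrank_map_subtype_eq]
    have := LinearMap.finrank_range_add_finrank_ker f
    rw [hrange, finrank_top, hrk] at this
    have h2 : Module.finrank (ZMod 2) (ZMod 2 × ZMod 2) = 2 := by
      simp
    omega
  · rw [isLCD_iff]
    rintro d hd hdual
    obtain ⟨y, hyker, hyd⟩ := hd
    subst hyd
    have hdv : (y : Fin n → ZMod 2) ⬝ᵥ v = 0 := congrArg Prod.fst (LinearMap.mem_ker.1 hyker)
    have hdw : (y : Fin n → ZMod 2) ⬝ᵥ w = 0 := congrArg Prod.snd (LinearMap.mem_ker.1 hyker)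
    set d' : Fin n → ZMod 2 := (y : Fin n → ZMod 2) with hd'
    have hd'C : d' ∈ C := y.2
    have : d' = 0 := by
      apply isLCD_iff.1 hC d' hd'C
      intro c hc
      set α : ZMod 2 := (w ⬝ᵥ w) * (c ⬝ᵥ v) + (c ⬝ᵥ w)
      set β : ZMod 2 := (c ⬝ᵥ v) + (v ⬝ᵥ v) * (c ⬝ᵥ w)
      set c' : Fin n → ZMod 2 := c + α • v + β • w with hc'
      have hc'C : c' ∈ C := C.add_mem (C.add_mem hc (C.smul_mem _ hv)) (C.smul_mem _ hw)
      have hc'v : c' ⬝ᵥ v = 0 := by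
        simp only [hc', add_dotProduct, smul_dotProduct, smul_eq_mul, α, β,
          (dotProduct_comm w v).trans hvw, hvw]
        have key : ∀ a e p s : ZMod 2, a * e = 0 →
            p + ((e * p + s) * a) + ((p + a * s) * 1) = 0 := by decide
        exact key (v ⬝ᵥ v) (w ⬝ᵥ w) (c ⬝ᵥ v) (c ⬝ᵥ w) hq
      have hc'w : c' ⬝ᵥ w = 0 := by
        simp only [hc', add_dotProduct, smul_dotProduct, smul_eq_mul, α, β, hvw]
        have key : ∀ a e p s : ZMod 2, a * e = 0 →
            s + ((e * p + s) * 1) + ((p + a * s) * e) = 0 := by decide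
        exact key (v ⬝ᵥ v) (w ⬝ᵥ w) (c ⬝ᵥ v) (c ⬝ᵥ w) hq
      have hc'D : c' ∈ Submodule.map C.subtype (LinearMap.ker f) := by
        have hker : f ⟨c', hc'C⟩ = 0 := by
          have he : f ⟨c', hc'C⟩ = (c' ⬝ᵥ v, c' ⬝ᵥ w) := rfl
          rw [he, hc'v, hc'w]
          rfl
        exact Submodule.mem_map.2 ⟨⟨c', hc'C⟩, LinearMap.mem_ker.2 hker, rfl⟩
      have hdc' : d' ⬝ᵥ c' = 0 := hdual c' hc'D
      have h2 : (2 : ZMod 2) = 0 := by decide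
      have hceq : c = c' + α • v + β • w := by
        funext i
        simp only [hc', Pi.add_apply, Pi.smul_apply, smul_eq_mul]
        linear_combination (-(α * v i + β * w i)) * h2
      rw [hceq, dotProduct_add, dotProduct_add, dotProduct_smul, dotProduct_smul,
        hdc', hdv, hdw]
      simp
    exact this

/-- If `k ≥ 4` is even, every binary `[n,k]` LCD code contains an `[n, k−2]` LCD subcode;
consequently `LCD[n,k] ≤ LCD[n,k−2]` for any `n ≥ k`. -/
theorem lcd_subcode_even (n k : ℕ) (hk : 4 ≤ k) (heven : Even k) (hn : k ≤ n) :
    (∀ C : Submodule (ZMod 2) (Fin n → ZMod 2),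
      Module.finrank (ZMod 2) ↥C = k → isLCD C →
      ∃ D : Submodule (ZMod 2) (Fin n → ZMod 2),
        D ≤ C ∧ Module.finrank (ZMod 2) ↥D = k - 2 ∧ isLCD D) ∧
    LCDmax n k ≤ LCDmax n (k - 2) := by
  have hk2 : 2 ≤ k := by omega
  constructor
  · intro C hrk hC
    exact exists_subcode hk2 C hrk hC
  · unfold LCDmax
    set S1 := {d | ∃ C : Submodule (ZMod 2) (Fin n → ZMod 2),
      Module.finrank (ZMod 2) ↥C = k ∧ hasMinDist C d ∧ isLCD C} with hS1
    set S2 := {d | ∃ C : Submodule (ZMod 2) (Fin n → ZMod 2),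
      Module.finrank (ZMod 2) ↥C = k - 2 ∧ hasMinDist C d ∧ isLCD C} with hS2
    by_cases hne : S1.Nonempty
    · have hbdd : BddAbove S2 := by
        refine ⟨n, fun m hm => ?_⟩
        obtain ⟨C, _, ⟨_, v, _, _, hnorm⟩, _⟩ := hm
        calc m = hammingNorm v := hnorm.symm
          _ ≤ Fintype.card (Fin n) := hammingNorm_le_card_fintype
          _ = n := Fintype.card_fin n
      apply csSup_le hne
      intro d hd
      obtain ⟨C, hrk, hmin, hC⟩ := hd
      obtain ⟨D, hDC, hrkD, hD⟩ := exists_subcode hk2 C hrk hC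
      have hDne : D ≠ ⊥ := by
        intro h
        rw [h, finrank_bot] at hrkD
        omega
      obtain ⟨x, hxD, hx0⟩ := Submodule.exists_mem_ne_zero_of_ne_bot hDne
      set T := {m | ∃ y ∈ D, y ≠ 0 ∧ hammingNorm y = m} with hT
      have hTne : T.Nonempty := ⟨hammingNorm x, x, hxD, hx0, rfl⟩
      set d' := sInf T with hd'
      have hd'mem : d' ∈ T := Nat.sInf_mem hTne
      obtain ⟨v0, hv0D, hv00, hv0norm⟩ := hd'mem
      have hmind : hasMinDist D d' :=
        ⟨fun y hy hy0 => Nat.sInf_le ⟨y, hy, hy0, rfl⟩, v0, hv0D, hv00, hv0norm⟩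
      have hd'S2 : d' ∈ S2 := ⟨D, hrkD, hmind, hD⟩
      have hdd' : d ≤ d' := by
        rw [← hv0norm]
        exact hmin.1 v0 (hDC hv0D) hv00
      exact le_trans hdd' (le_csSup hbdd hd'S2)
    · rw [Set.not_nonempty_iff_eq_empty] at hne
      rw [hne, csSup_empty]
      exact Nat.zero_le _
end
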